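/- Every Markov number m > 2 is a sum of two relatively prime squares: there exist positive integers a < b with gcd(a,b) = 1 and m = a² + b². -/

import Mathlib

set_option maxHeartbeats 1000000

private lemma markov_key (n : ℕ)
    (ih : ∀ x y z : ℕ, x + y + z ≤ n → 0 < x → 0 < y → 0 < z →
      x^2+y^2+z^2 = 3*x*y*z → ∀ p : ℕ, p.Prime → p ∣ x → p ∣ y → p ∣ z → False)
    (x y z : ℕ) (hs : x + y + z ≤ n + 1) (hx : 0 < x) (hy : 0 < y) (hz : 0 < z)
    (hxy : x ≤ y) (hyz : y ≤ z) (h : x^2+y^2+z^2 = 3*x*y*z)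
    (p : ℕ) (hp : p.Prime) (hpx : p ∣ x) (hpy : p ∣ y) (hpz : p ∣ z) : False := by
  rcases Nat.lt_or_ge x 2 with h1 | h2
  · -- x = 1, so p ∣ 1
    interval_cases x
    · have := Nat.dvd_one.mp hpx
      have := hp.one_lt
      omega
  · -- Vieta descent
    have hz3 : z ≤ 3*x*y := by
      have h0 : z*z ≤ (3*x*y)*z := by nlinarith [sq_nonneg x, sq_nonneg y]
      exact Nat.le_of_mul_le_mul_right h0 hz
    obtain ⟨w, hwz⟩ : ∃ w, w + z = 3*x*y := ⟨3*x*y - z, by omega⟩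
    have e1 : w*z + z^2 = 3*x*y*z := by rw [pow_two, ← Nat.add_mul, hwz]
    have hwzeq : w * z = x^2 + y^2 := by omega
    have hw0 : 0 < w := by
      rcases Nat.eq_zero_or_pos w with h0 | h0
      · rw [h0] at hwzeq; nlinarith
      · exact h0
    have hxyz : x*y ≤ z := by
      have h0 : (3*(x*y))*z ≤ (3*z)*z := by nlinarith
      have := Nat.le_of_mul_le_mul_right h0 hz
      omega
    have hlt : x^2 + y^2 < z^2 := by
      nlinarith [Nat.mul_le_mul hxyz hxyz]
    have hwltz : w < z := by
      have : w * z < z * z := by nlinarith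
      exact Nat.lt_of_mul_lt_mul_right this
    have hneweq : x^2+y^2+w^2 = 3*x*y*w := by
      rw [← hwzeq, pow_two, ← Nat.mul_add, add_comm z w, hwz]
      ring
    have hpw : p ∣ w := by
      have : w = 3*x*y - z := by omega
      rw [this]
      exact Nat.dvd_sub ((hpx.mul_left 3).mul_right y) hpz
    exact ih x y w (by omega) hx hy hw0 hneweq p hp hpx hpy hpw

private lemma markov_nodvd : ∀ N x y z : ℕ, x + y + z ≤ N → 0 < x → 0 < y → 0 < z →
    x^2 + y^2 + z^2 = 3*x*y*z → ∀ p : ℕ, p.Prime → p ∣ x → p ∣ y → p ∣ z → False := by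
  intro N
  induction N with
  | zero => intro x y z h hx _ _; omega
  | succ n ih =>
    intro x y z hs hx hy hz h p hp hpx hpy hpz
    rcases le_total x y with h1 | h1 <;> rcases le_total y z with h2 | h2 <;>
      rcases le_total x z with h3 | h3
    · exact markov_key n ih x y z hs hx hy hz h1 h2 h p hp hpx hpy hpz
    · exact markov_key n ih x y z hs hx hy hz h1 h2 h p hp hpx hpy hpz
    · exact markov_key n ih x z y (by omega) hx hz hy h3 h2 (by linear_combination h) p hp hpx hpz hpy
    · exact markov_key n ih z x y (by omega) hz hx hy h3 h1 (by linear_combination h) p hp hpz hpx hpy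
    · exact markov_key n ih y x z (by omega) hy hx hz h1 h3 (by linear_combination h) p hp hpy hpx hpz
    · exact markov_key n ih y z x (by omega) hy hz hx h2 h3 (by linear_combination h) p hp hpy hpz hpx
    · exact markov_key n ih z y x (by omega) hz hy hx h2 h1 (by linear_combination h) p hp hpz hpy hpx
    · exact markov_key n ih z y x (by omega) hz hy hx h2 h1 (by linear_combination h) p hp hpz hpy hpx

set_option synthInstance.maxHeartbeats 400000
set_option maxHeartbeats 1000000

private lemma gaussian_prime_of_norm_prime (w : GaussianInt)
    (hp : (Zsqrtd.norm w).natAbs.Prime) : Prime w := by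
  have hirr : Irreducible w := by
    constructor
    · intro hu
      rw [← Zsqrtd.norm_eq_one_iff] at hu
      rw [hu] at hp
      exact hp.one_lt.ne' rfl
    · intro a b hab
      have hn : (Zsqrtd.norm a).natAbs * (Zsqrtd.norm b).natAbs = (Zsqrtd.norm w).natAbs := by
        rw [← Int.natAbs_mul, ← Zsqrtd.norm_mul, hab]
      rcases (Nat.prime_mul_iff.mp (hn ▸ hp)) with ⟨_, h1⟩ | ⟨_, h1⟩
      · right; exact Zsqrtd.norm_eq_one_iff.mp h1
      · left; exact Zsqrtd.norm_eq_one_iff.mp h1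
  exact hirr.prime


private lemma prime_pow_sq_add_sq (p k : ℕ) (hp : p.Prime) (hp1 : p % 4 = 1) (hk : 0 < k) :
    ∃ a b : ℕ, Nat.Coprime a b ∧ p ^ k = a^2 + b^2 := by
  haveI : Fact p.Prime := ⟨hp⟩
  have hpi : ¬ Irreducible (p : GaussianInt) := by
    intro hi
    have := (GaussianInt.prime_iff_mod_four_eq_three_of_nat_prime p).mp hi.prime
    omega
  obtain ⟨a, b, habp⟩ := GaussianInt.sq_add_sq_of_nat_prime_of_not_irreducible p hpi
  set π : GaussianInt := ⟨(a : ℤ), (b : ℤ)⟩ with hπdef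
  have hnormπ : Zsqrtd.norm π = (p : ℤ) := by
    rw [Zsqrtd.norm_def]
    push_cast [← habp]
    ring
  have hπprime : Prime π := by
    apply gaussian_prime_of_norm_prime
    rw [hnormπ]
    simpa using hp
  have hconjprime : Prime (star π) := by
    apply gaussian_prime_of_norm_prime
    rw [Zsqrtd.norm_conj, hnormπ]
    simpa using hp
  have hmulconj : π * star π = (p : GaussianInt) := by
    have := Zsqrtd.norm_eq_mul_conj π
    rw [hnormπ] at this
    exact_mod_cast this.symm
  set w : GaussianInt := π ^ k with hwdef
  have hnormw : Zsqrtd.norm w = (p : ℤ) ^ k := by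
    rw [hwdef, ← hnormπ]
    exact map_pow (Zsqrtd.normMonoidHom) π k
  have hsq : (w.re.natAbs)^2 + (w.im.natAbs)^2 = p ^ k := by
    have hnd : Zsqrtd.norm w = w.re * w.re + w.im * w.im := by
      rw [Zsqrtd.norm_def]; ring
    have h2 : ((w.re.natAbs)^2 + (w.im.natAbs)^2 : ℤ) = ((p:ℤ))^k := by
      rw [← hnormw, hnd]
      push_cast [sq_abs, Int.natAbs_sq]
      simp [Int.natAbs_sq, sq]
    exact_mod_cast h2
  refine ⟨w.re.natAbs, w.im.natAbs, ?_, hsq.symm⟩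
  by_contra hnc
  obtain ⟨q, hq, hqd⟩ := Nat.exists_prime_and_dvd hnc
  have hqc : q ∣ w.re.natAbs := hqd.trans (Nat.gcd_dvd_left _ _)
  have hqd' : q ∣ w.im.natAbs := hqd.trans (Nat.gcd_dvd_right _ _)
  obtain rfl : q = p := by
    have : q ∣ p ^ k := by
      rw [← hsq]
      exact Dvd.dvd.add (Dvd.dvd.pow hqc two_ne_zero) (Dvd.dvd.pow hqd' two_ne_zero)
    exact (Nat.prime_dvd_prime_iff_eq hq hp).mp (hq.dvd_of_dvd_pow this)
  -- now q = p divides both components, so (p : ℤ[i]) ∣ w = π ^ k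
  have hdvdw : ((q:ℤ) : GaussianInt) ∣ w := by
    rw [Zsqrtd.intCast_dvd]
    exact ⟨Int.natCast_dvd.mpr hqc, Int.natCast_dvd.mpr hqd'⟩
  have hstardvd : star π ∣ π := by
    apply hconjprime.dvd_of_dvd_pow (n := k)
    have h1 : star π ∣ ((q:ℤ) : GaussianInt) := ⟨π, by rw [show ((q:ℤ):GaussianInt) = ((q:ℕ):GaussianInt) by push_cast; rfl, ← hmulconj]; ring⟩
    exact h1.trans hdvdw
  have hassoc : Associated (star π) π :=
    hconjprime.irreducible.associated_of_dvd hπprime.irreducible hstardvd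
  obtain ⟨u, hu⟩ := hassoc
  have hππ : π * π = ((q:ℕ) : GaussianInt) * u := by
    nth_rewrite 2 [← hu]
    rw [← mul_assoc, hmulconj]
  have hqdvd : ((q:ℤ) : GaussianInt) ∣ π * π := by
    refine ⟨u, ?_⟩
    rw [hππ]
    push_cast
    ring
  rw [Zsqrtd.intCast_dvd] at hqdvd
  obtain ⟨hre, _⟩ := hqdvd
  have hre' : (q:ℤ) ∣ (a:ℤ)*a - b*b := by
    have : (π * π).re = (a:ℤ)*a - b*b := by
      rw [hπdef]; simp [Zsqrtd.re_mul]; ring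
    rwa [this] at hre
  have hsum : (q:ℤ) ∣ (a:ℤ)*a + b*b := by
    have heq : ((a:ℤ)*a + b*b) = (q:ℤ) := by
      have := habp
      push_cast [← this]
      ring
    rw [heq]
  have h2a : (q:ℤ) ∣ 2*((a:ℤ)*a) := by
    have := dvd_add hre' hsum
    rw [show 2*((a:ℤ)*a) = (a:ℤ)*a - b*b + (a*a + b*b) by ring]; exact this
  have h2b : (q:ℤ) ∣ 2*((b:ℤ)*b) := by
    have := dvd_sub hsum hre'
    rw [show 2*((b:ℤ)*b) = (a:ℤ)*a + b*b - (a*a - b*b) by ring]; exact this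
  have hq2 : ¬ ((q:ℤ) ∣ 2) := by
    intro h2
    have h3 : (q:ℤ) ≤ 2 := Int.le_of_dvd (by norm_num) h2
    have h4 : q ≤ 2 := by exact_mod_cast h3
    have := hq.two_le
    omega
  have hqpZ : Prime (q : ℤ) := Nat.prime_iff_prime_int.mp hq
  have hqa : q ∣ a := by
    rcases hqpZ.dvd_mul.mp h2a with h' | h'
    · exact absurd h' hq2
    · rcases hqpZ.dvd_mul.mp h' with h'' | h'' <;> exact_mod_cast h''
  have hqb : q ∣ b := by
    rcases hqpZ.dvd_mul.mp h2b with h' | h'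
    · exact absurd h' hq2
    · rcases hqpZ.dvd_mul.mp h' with h'' | h'' <;> exact_mod_cast h''
  have hdq : q*q ∣ a^2 + b^2 := by
    have h1 : q*q ∣ a*a := Nat.mul_dvd_mul hqa hqa
    have h2 : q*q ∣ b*b := Nat.mul_dvd_mul hqb hqb
    simpa [pow_two] using dvd_add h1 h2
  rw [habp] at hdq
  have := Nat.le_of_dvd hp.pos hdq
  nlinarith [hp.two_le]

private lemma coprime_sq_add_sq_mul (m n : ℕ) (hmn : Nat.Coprime m n)
    (a b c d : ℕ) (hab : Nat.Coprime a b) (hm : m = a^2 + b^2)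
    (hcd : Nat.Coprime c d) (hn : n = c^2 + d^2) :
    ∃ e f : ℕ, Nat.Coprime e f ∧ m * n = e^2 + f^2 := by
  set e : ℤ := (a:ℤ)*c - b*d with he
  set f : ℤ := (a:ℤ)*d + b*c with hf
  have key : e^2 + f^2 = (m : ℤ) * n := by
    rw [he, hf]
    have hm' : (m:ℤ) = (a:ℤ)^2 + (b:ℤ)^2 := by exact_mod_cast hm
    have hn' : (n:ℤ) = (c:ℤ)^2 + (d:ℤ)^2 := by exact_mod_cast hn
    rw [hm', hn']; ring
  refine ⟨e.natAbs, f.natAbs, ?_, ?_⟩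
  · by_contra hnc
    obtain ⟨q, hq, hqd⟩ := Nat.exists_prime_and_dvd hnc
    have hqe : (q:ℤ) ∣ e := Int.natCast_dvd.mpr (hqd.trans (Nat.gcd_dvd_left _ _))
    have hqf : (q:ℤ) ∣ f := Int.natCast_dvd.mpr (hqd.trans (Nat.gcd_dvd_right _ _))
    have hqZ : Prime (q:ℤ) := Nat.prime_iff_prime_int.mp hq
    have han : (q:ℤ) ∣ (a:ℤ) * n := by
      have : (a:ℤ) * n = c * e + d * f := by
        rw [he, hf]
        have hn' : (n:ℤ) = (c:ℤ)^2 + (d:ℤ)^2 := by exact_mod_cast hn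
        rw [hn']; ring
      rw [this]; exact dvd_add (hqe.mul_left c) (hqf.mul_left d)
    have hbn : (q:ℤ) ∣ (b:ℤ) * n := by
      have : (b:ℤ) * n = c * f - d * e := by
        rw [he, hf]
        have hn' : (n:ℤ) = (c:ℤ)^2 + (d:ℤ)^2 := by exact_mod_cast hn
        rw [hn']; ring
      rw [this]; exact dvd_sub (hqf.mul_left c) (hqe.mul_left d)
    have hcm : (q:ℤ) ∣ (c:ℤ) * m := by
      have : (c:ℤ) * m = a * e + b * f := by
        rw [he, hf]
        have hm' : (m:ℤ) = (a:ℤ)^2 + (b:ℤ)^2 := by exact_mod_cast hm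
        rw [hm']; ring
      rw [this]; exact dvd_add (hqe.mul_left a) (hqf.mul_left b)
    have hdm : (q:ℤ) ∣ (d:ℤ) * m := by
      have : (d:ℤ) * m = a * f - b * e := by
        rw [he, hf]
        have hm' : (m:ℤ) = (a:ℤ)^2 + (b:ℤ)^2 := by exact_mod_cast hm
        rw [hm']; ring
      rw [this]; exact dvd_sub (hqf.mul_left a) (hqe.mul_left b)
    have hqmn : q ∣ m * n := by
      have : (q:ℤ) ∣ (m:ℤ) * n := by
        rw [← key]
        exact dvd_add (by rw [pow_two]; exact hqe.mul_left e) (by rw [pow_two]; exact hqf.mul_left f)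
      exact_mod_cast this
    rcases (Nat.Prime.dvd_mul hq).mp hqmn with hqm | hqn
    · -- q ∣ m, so q ∤ n, so q ∣ a and q ∣ b : contradiction
      have hqnn : ¬ (q ∣ n) := by
        intro hqn
        have h1 := Nat.dvd_gcd hqm hqn
        rw [hmn] at h1
        exact hq.one_lt.ne' (Nat.dvd_one.mp h1)
      have hqa : q ∣ a := by
        rcases hqZ.dvd_mul.mp han with h' | h'
        · exact_mod_cast h'
        · exact absurd (Int.natCast_dvd_natCast.mp h') hqnn
      have hqb : q ∣ b := by
        rcases hqZ.dvd_mul.mp hbn with h' | h'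
        · exact_mod_cast h'
        · exact absurd (Int.natCast_dvd_natCast.mp h') hqnn
      have h1 := Nat.dvd_gcd hqa hqb
      rw [hab] at h1
      exact hq.one_lt.ne' (Nat.dvd_one.mp h1)
    · have hqmm : ¬ (q ∣ m) := by
        intro hqm
        have h1 := Nat.dvd_gcd hqm hqn
        rw [hmn] at h1
        exact hq.one_lt.ne' (Nat.dvd_one.mp h1)
      have hqc : q ∣ c := by
        rcases hqZ.dvd_mul.mp hcm with h' | h'
        · exact_mod_cast h'
        · exact absurd (Int.natCast_dvd_natCast.mp h') hqmm
      have hqd2 : q ∣ d := by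
        rcases hqZ.dvd_mul.mp hdm with h' | h'
        · exact_mod_cast h'
        · exact absurd (Int.natCast_dvd_natCast.mp h') hqmm
      have h1 := Nat.dvd_gcd hqc hqd2
      rw [hcd] at h1
      exact hq.one_lt.ne' (Nat.dvd_one.mp h1)
  · have : ((e.natAbs)^2 + (f.natAbs)^2 : ℤ) = (m:ℤ) * n := by
      rw [← key]
      push_cast [sq_abs]
      simp [sq_abs]
    exact_mod_cast this.symm

private lemma sq_add_sq_coprime_of_isSquare_neg_one (n : ℕ) (h : IsSquare (-1 : ZMod n)) :
    ∃ a b : ℕ, Nat.Coprime a b ∧ n = a^2 + b^2 := by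
  induction n using Nat.recOnPosPrimePosCoprime with
  | prime_pow p k hpp hk =>
    have hp : p.Prime := hpp
    by_cases hp2 : p = 2
    · subst hp2
      rcases Nat.lt_or_ge k 2 with hk2 | hk2
      · interval_cases k
        · exact ⟨1, 1, Nat.coprime_one_right 1, by norm_num⟩
      · exfalso
        have h4 : (4:ℕ) ∣ 2^k := by
          have : (2:ℕ)^2 ∣ 2^k := pow_dvd_pow 2 hk2
          simpa using this
        have := ZMod.isSquare_neg_one_of_dvd h4 h
        revert this; decide
    · haveI : Fact p.Prime := ⟨hp⟩
      have hsqp := ZMod.isSquare_neg_one_of_dvd (dvd_pow_self p hk.ne') h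
      have h3 : p % 4 ≠ 3 := ZMod.exists_sq_eq_neg_one_iff.mp hsqp
      have hodd : p % 2 = 1 := Nat.odd_iff.mp (hp.odd_of_ne_two hp2)
      exact prime_pow_sq_add_sq p k hp (by omega) hk
  | zero =>
    exfalso
    have := ZMod.isSquare_neg_one_of_dvd (dvd_zero 4) h
    revert this; decide
  | one => exact ⟨0, 1, Nat.coprime_one_right 0, by norm_num⟩
  | coprime a b ha hb hab iha ihb =>
    obtain ⟨x, y, hxy, hax⟩ := iha (ZMod.isSquare_neg_one_of_dvd (dvd_mul_right a b) h)
    obtain ⟨u, v, huv, hbu⟩ := ihb (ZMod.isSquare_neg_one_of_dvd (dvd_mul_left b a) h)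
    exact coprime_sq_add_sq_mul a b hab x y u v hxy hax huv hbu

/-- Every Markov number m > 2 is a sum of two relatively prime squares. -/
theorem stmt16 (m y z : ℕ) (hm : 2 < m) (hy : 0 < y) (hz : 0 < z)
    (h : m ^ 2 + y ^ 2 + z ^ 2 = 3 * m * y * z) :
    ∃ a b : ℕ, 0 < a ∧ a < b ∧ Nat.gcd a b = 1 ∧ m = a ^ 2 + b ^ 2 := by
  have hm0 : 0 < m := by omega
  -- z is coprime to m
  have hzm : Nat.Coprime z m := by
    rw [Nat.coprime_iff_gcd_eq_one]
    by_contra hne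
    obtain ⟨q, hq, hqd⟩ := Nat.exists_prime_and_dvd hne
    have hqz : q ∣ z := hqd.trans (Nat.gcd_dvd_left _ _)
    have hqm : q ∣ m := hqd.trans (Nat.gcd_dvd_right _ _)
    have hqy : q ∣ y := by
      have h1 : q ∣ 3*m*y*z := ((hqm.mul_left 3).mul_right y).mul_right z
      rw [← h] at h1
      have h2 : q ∣ m^2 := hqm.pow two_ne_zero
      have h3 : q ∣ z^2 := hqz.pow two_ne_zero
      have h4 : q ∣ y^2 := by
        have h5 : q ∣ y^2 + z^2 := (Nat.dvd_add_right h2).mp (by rwa [← add_assoc])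
        have h6 : y^2 = (y^2 + z^2) - z^2 := by omega
        rw [h6]
        exact Nat.dvd_sub h5 h3
      exact hq.dvd_of_dvd_pow h4
    exact markov_nodvd (m+y+z) m y z le_rfl hm0 hy hz h q hq hqm hqy hqz
  -- m divides y^2 + z^2
  have hdvd : m ∣ y^2 + z^2 := by
    have h1 : m ∣ 3*m*y*z := ((dvd_refl m).mul_left 3).mul_right y |>.mul_right z
    rw [← h] at h1
    exact (Nat.dvd_add_right ((dvd_refl m).pow two_ne_zero)).mp (by rwa [← add_assoc])
  -- -1 is a square mod m
  have hsq : IsSquare (-1 : ZMod m) := by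
    have hzinv : (z : ZMod m) * (z : ZMod m)⁻¹ = 1 := ZMod.coe_mul_inv_eq_one z hzm
    have hy2 : ((y : ZMod m))^2 + ((z : ZMod m))^2 = 0 := by
      have : (((y^2 + z^2 : ℕ)) : ZMod m) = 0 := (ZMod.natCast_eq_zero_iff _ _).mpr hdvd
      push_cast at this
      linear_combination this
    refine ⟨(y : ZMod m) * (z : ZMod m)⁻¹, ?_⟩
    linear_combination ((z:ZMod m) * (z:ZMod m)⁻¹ + 1) * hzinv - ((z:ZMod m)⁻¹)^2 * hy2
  obtain ⟨a, b, hab, habm⟩ := sq_add_sq_coprime_of_isSquare_neg_one m hsq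
  -- now order and exclude degenerate cases
  rcases le_total a b with hle | hle
  · refine ⟨a, b, ?_, ?_, hab, habm⟩
    · rcases Nat.eq_zero_or_pos a with h0 | h0
      · exfalso
        rw [h0] at hab habm
        have : b = 1 := by simpa [Nat.Coprime] using hab
        subst this
        norm_num at habm
        omega
      · exact h0
    · rcases Nat.lt_or_ge a b with h0 | h0
      · exact h0
      · exfalso
        have hab' : a = b := by omega
        rw [hab'] at hab habm
        have : b = 1 := by simpa [Nat.Coprime] using hab
        subst this
        norm_num at habm
        omega
  · refine ⟨b, a, ?_, ?_, (Nat.coprime_comm.mp hab), by omega⟩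
    · rcases Nat.eq_zero_or_pos b with h0 | h0
      · exfalso
        rw [h0] at hab habm
        have : a = 1 := by simpa [Nat.Coprime] using hab
        subst this
        norm_num at habm
        omega
      · exact h0
    · rcases Nat.lt_or_ge b a with h0 | h0
      · exact h0
      · exfalso
        have hab' : a = b := by omega
        rw [hab'] at hab habm
        have : b = 1 := by simpa [Nat.Coprime] using hab
        subst this
        norm_num at habm
        omega
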